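/- arXiv:2303.02419 — 3 statements merged into one kernel-verified Lean document; each statement's English description precedes it below -/
import Mathlib

section
/- Let 0 < p_cl < 1/2 be a real number, let w_0 ≥ 1 be a natural number, and set w_i = 2^i · w_0 for each i ∈ ℕ. Then for any real p, the total stationary mass of the non-idle states, namely S = ∑_{i=0}^∞ [ p·p_cl^i + ∑_{j=1}^{w_i - 1} p·(w_i − j)·p_cl^i / (w_i·(1 − p_cl)) ], converges and equals p·(4·p_cl² − (w_0 + 4)·p_cl + w_0 + 1) / (2·(1 − p_cl)²·(1 − 2·p_cl)). Equivalently, the idle probability b_idle = 1 − S equals 1 − p·(4·p_cl² − (w_0 + 4)·p_cl + w_0 + 1) / (2·(1 − p_cl)²·(1 − 2·p_cl)). -/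
lemma gauss_icc (n : ℕ) : ∑ j ∈ Finset.Icc 1 n, (j : ℝ) = n * (n + 1) / 2 := by
  induction n with
  | zero => simp
  | succ n ih =>
    rw [Finset.sum_Icc_succ_top (by omega)]
    push_cast
    rw [ih]; ring

lemma sum_wj (w : ℕ) (hw : 1 ≤ w) :
    ∑ j ∈ Finset.Icc 1 (w - 1), ((w : ℝ) - (j : ℝ)) = w * (w - 1) / 2 := by
  rw [Finset.sum_sub_distrib, Finset.sum_const, gauss_icc, Nat.card_Icc]
  have hc : ((w - 1 : ℕ) : ℝ) = (w : ℝ) - 1 := by push_cast [hw]; ring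
  simp only [Nat.add_sub_cancel, nsmul_eq_mul, hc]
  ring

/-- Proposition 1 (normalization): with `0 < p_cl < 1/2`, `w₀ ≥ 1`, and `wᵢ = 2^i·w₀`,
the total stationary mass of the non-idle states
`S = ∑_{i=0}^∞ [ p·p_cl^i + ∑_{j=1}^{wᵢ-1} p·(wᵢ−j)·p_cl^i/(wᵢ·(1−p_cl)) ]`
converges and equals `p·(4·p_cl² − (w₀+4)·p_cl + w₀ + 1)/(2·(1−p_cl)²·(1−2·p_cl))`;
equivalently the idle probability `b_idle = 1 − S` equals one minus that closed form. -/
theorem csma_stationary_normalization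
    (p_cl : ℝ) (hcl0 : 0 < p_cl) (hcl2 : p_cl < 1 / 2)
    (w0 : ℕ) (hw0 : 1 ≤ w0) (p : ℝ) :
    HasSum
      (fun i : ℕ =>
        p * p_cl ^ i +
          ∑ j ∈ Finset.Icc 1 (2 ^ i * w0 - 1),
            p * ((2 : ℝ) ^ i * (w0 : ℝ) - (j : ℝ)) * p_cl ^ i /
              (((2 : ℝ) ^ i * (w0 : ℝ)) * (1 - p_cl)))
      (p * (4 * p_cl ^ 2 - ((w0 : ℝ) + 4) * p_cl + (w0 : ℝ) + 1) /
        (2 * (1 - p_cl) ^ 2 * (1 - 2 * p_cl))) ∧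
    1 - ∑' i : ℕ,
        (p * p_cl ^ i +
          ∑ j ∈ Finset.Icc 1 (2 ^ i * w0 - 1),
            p * ((2 : ℝ) ^ i * (w0 : ℝ) - (j : ℝ)) * p_cl ^ i /
              (((2 : ℝ) ^ i * (w0 : ℝ)) * (1 - p_cl))) =
      1 - p * (4 * p_cl ^ 2 - ((w0 : ℝ) + 4) * p_cl + (w0 : ℝ) + 1) /
        (2 * (1 - p_cl) ^ 2 * (1 - 2 * p_cl)) := by
  have h1 : p_cl < 1 := by linarith
  have h1' : (1 : ℝ) - p_cl ≠ 0 := by linarith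
  have h2' : (1 : ℝ) - 2 * p_cl ≠ 0 := by linarith
  have hmain : HasSum
      (fun i : ℕ =>
        p * p_cl ^ i +
          ∑ j ∈ Finset.Icc 1 (2 ^ i * w0 - 1),
            p * ((2 : ℝ) ^ i * (w0 : ℝ) - (j : ℝ)) * p_cl ^ i /
              (((2 : ℝ) ^ i * (w0 : ℝ)) * (1 - p_cl)))
      (p * (4 * p_cl ^ 2 - ((w0 : ℝ) + 4) * p_cl + (w0 : ℝ) + 1) /
        (2 * (1 - p_cl) ^ 2 * (1 - 2 * p_cl))) := by
    have hfun : (fun i : ℕ =>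
        p * p_cl ^ i +
          ∑ j ∈ Finset.Icc 1 (2 ^ i * w0 - 1),
            p * ((2 : ℝ) ^ i * (w0 : ℝ) - (j : ℝ)) * p_cl ^ i /
              (((2 : ℝ) ^ i * (w0 : ℝ)) * (1 - p_cl)))
        = fun i : ℕ =>
          p / (2 * (1 - p_cl)) * ((1 - 2 * p_cl) * p_cl ^ i + (w0 : ℝ) * (2 * p_cl) ^ i) := by
      funext i
      have hw : 1 ≤ 2 ^ i * w0 := Nat.one_le_iff_ne_zero.2 (by positivity)
      have hwR : ((2 ^ i * w0 : ℕ) : ℝ) = (2 : ℝ) ^ i * (w0 : ℝ) := by push_cast; ring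
      have hwpos : (0 : ℝ) < (2 : ℝ) ^ i * (w0 : ℝ) := by
        have : (0:ℝ) < (w0:ℝ) := by exact_mod_cast hw0
        positivity
      have hsum : ∑ j ∈ Finset.Icc 1 (2 ^ i * w0 - 1),
          p * ((2 : ℝ) ^ i * (w0 : ℝ) - (j : ℝ)) * p_cl ^ i /
            (((2 : ℝ) ^ i * (w0 : ℝ)) * (1 - p_cl))
          = (p * p_cl ^ i / (((2 : ℝ) ^ i * (w0 : ℝ)) * (1 - p_cl))) *
            ∑ j ∈ Finset.Icc 1 (2 ^ i * w0 - 1), (((2 ^ i * w0 : ℕ) : ℝ) - (j : ℝ)) := by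
        rw [Finset.mul_sum]
        apply Finset.sum_congr rfl
        intro j _
        rw [hwR]; ring
      rw [hsum, sum_wj _ hw, hwR, mul_pow]
      have hne : ((2:ℝ) ^ i * (w0:ℝ)) ≠ 0 := ne_of_gt hwpos
      field_simp
      ring
    rw [hfun]
    have hg1 : HasSum (fun i : ℕ => p_cl ^ i) (1 - p_cl)⁻¹ :=
      hasSum_geometric_of_lt_one hcl0.le h1
    have hg2 : HasSum (fun i : ℕ => (2 * p_cl) ^ i) (1 - 2 * p_cl)⁻¹ :=
      hasSum_geometric_of_lt_one (by linarith) (by linarith)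
    have := ((hg1.mul_left (1 - 2 * p_cl)).add (hg2.mul_left (w0 : ℝ))).mul_left
      (p / (2 * (1 - p_cl)))
    convert this using 1
    · rfl
    field_simp
    ring
  exact ⟨hmain, by rw [hmain.tsum_eq]⟩
end

section
/- Let 0 < p < 1 and 0 < β < 1 be real numbers. Let X and T be independent random variables on a probability space, each taking values in the positive integers, with P(X = j) = p·(1 − p)^{j−1} and P(T = j) = β·(1 − β)^{j−1} for j = 1, 2, …. Then E[X·max(0, T − X)] = p·(1 − β) / (β·(1 − (1 − p)·(1 − β))²). -/
open MeasureTheory ProbabilityTheory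

lemma hasSum_succ_mul_geometric_aux {r : ℝ} (h0 : 0 ≤ r) (h1 : r < 1) :
    HasSum (fun k : ℕ => ((k : ℝ) + 1) * r ^ k) (1 / (1 - r) ^ 2) := by
  have hr : ‖r‖ < 1 := by rwa [Real.norm_eq_abs, abs_of_nonneg h0]
  have h1' : (1 : ℝ) - r ≠ 0 := by intro h; nlinarith
  have hA := hasSum_coe_mul_geometric_of_norm_lt_one (𝕜 := ℝ) hr
  have hB := hasSum_geometric_of_lt_one h0 h1
  have hAB := hA.add hB
  have hfun : (fun k : ℕ => ((k : ℝ) + 1) * r ^ k)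
      = fun k : ℕ => (k : ℝ) * r ^ k + r ^ k := by
    funext k; ring
  rw [hfun]
  convert hAB using 1
  case e'_3 => rfl
  field_simp
  ring

/-- E[X_k·W_k] for the Geom/Geom/1 queue: if `X` and `T` are independent,
geometric on the positive integers with parameters `p` and `β` respectively,
then `E[X·max(0, T − X)] = p·(1 − β)/(β·(1 − (1 − p)·(1 − β))²)`. -/
theorem geometric_waiting_cross_moment
    {Ω : Type*} [MeasurableSpace Ω] (P : Measure Ω) [IsProbabilityMeasure P]
    (p β : ℝ) (hp0 : 0 < p) (hp1 : p < 1) (hβ0 : 0 < β) (hβ1 : β < 1)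
    (X T : Ω → ℕ) (hX : Measurable X) (hT : Measurable T)
    (hind : IndepFun X T P)
    (hXpos : ∀ ω, 1 ≤ X ω) (hTpos : ∀ ω, 1 ≤ T ω)
    (hXdist : ∀ j : ℕ, 1 ≤ j →
      P {ω | X ω = j} = ENNReal.ofReal (p * (1 - p) ^ (j - 1)))
    (hTdist : ∀ j : ℕ, 1 ≤ j →
      P {ω | T ω = j} = ENNReal.ofReal (β * (1 - β) ^ (j - 1))) :
    ∫ ω, (X ω : ℝ) * max 0 ((T ω : ℝ) - (X ω : ℝ)) ∂P =
      p * (1 - β) / (β * (1 - (1 - p) * (1 - β)) ^ 2) := by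
  have hq0 : (0:ℝ) ≤ 1 - p := by linarith
  have hq1 : (1:ℝ) - p < 1 := by linarith
  have hr0 : (0:ℝ) ≤ 1 - β := by linarith
  have hr1 : (1:ℝ) - β < 1 := by linarith
  have hs0 : (0:ℝ) ≤ (1 - p) * (1 - β) := mul_nonneg hq0 hr0
  have hs1 : (1 - p) * (1 - β) < 1 := by nlinarith
  have hβne : β ≠ 0 := ne_of_gt hβ0
  have hsne : 1 - (1 - p) * (1 - β) ≠ 0 := by intro h; nlinarith
  -- The double-indexed summand
  set F : ℕ × ℕ → ℝ := fun a =>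
    (a.1 : ℝ) * max 0 ((a.2 : ℝ) - a.1) *
      (p * (1 - p) ^ (a.1 - 1) * (β * (1 - β) ^ (a.2 - 1))) with hFdef
  have hFnn : ∀ a, 0 ≤ F a := by
    intro a
    apply mul_nonneg
    · exact mul_nonneg (Nat.cast_nonneg _) (le_max_left _ _)
    · positivity
  -- row sums
  have hrow : ∀ i : ℕ, HasSum (fun j => F (i, j))
      ((i : ℝ) * (p * (1 - p) ^ (i - 1)) * (1 - β) ^ i / β) := by
    intro i
    have hshift : HasSum (fun n : ℕ => F (i, n + (i + 1)))
        ((i : ℝ) * (p * (1 - p) ^ (i - 1)) * (1 - β) ^ i / β) := by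
      have hbase := (hasSum_succ_mul_geometric_aux hr0 hr1).mul_left
        ((i : ℝ) * (p * (1 - p) ^ (i - 1)) * (β * (1 - β) ^ i))
      have hfun : (fun n : ℕ => (i : ℝ) * (p * (1 - p) ^ (i - 1)) * (β * (1 - β) ^ i) *
          (((n : ℝ) + 1) * (1 - β) ^ n)) = fun n : ℕ => F (i, n + (i + 1)) := by
        funext n
        have hmax : max 0 (((n + (i + 1) : ℕ) : ℝ) - (i : ℝ)) = (n : ℝ) + 1 := by
          have hn : (0:ℝ) ≤ (n:ℝ) := Nat.cast_nonneg n
          push_cast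
          rw [max_eq_right (by linarith)]
          ring
        have hexp : (n + (i + 1)) - 1 = n + i := by omega
        simp only [hFdef, hmax, hexp, pow_add]
        ring
      rw [hfun] at hbase
      convert hbase using 1
      case e'_3 => rfl
      have : (1:ℝ) - (1 - β) = β := by ring
      rw [this]
      field_simp
    have := (hasSum_nat_add_iff (f := fun j => F (i, j)) (i + 1)).mp hshift
    have hzero : ∑ j ∈ Finset.range (i + 1), F (i, j) = 0 := by
      apply Finset.sum_eq_zero
      intro j hj
      have hj' : j ≤ i := by
        have := Finset.mem_range.mp hj; omega
      have : max 0 ((j : ℝ) - (i : ℝ)) = 0 := by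
        apply max_eq_left
        have : (j : ℝ) ≤ (i : ℝ) := by exact_mod_cast hj'
        linarith
      simp [hFdef, this]
    rwa [hzero, add_zero] at this
  -- the outer sum
  have houter : HasSum (fun i : ℕ => (i : ℝ) * (p * (1 - p) ^ (i - 1)) * (1 - β) ^ i / β)
      (p * (1 - β) / β * (1 / (1 - (1 - p) * (1 - β)) ^ 2)) := by
    have hbase := (hasSum_succ_mul_geometric_aux hs0 hs1).mul_left (p * (1 - β) / β)
    have hfun : (fun n : ℕ => p * (1 - β) / β * (((n : ℝ) + 1) * ((1 - p) * (1 - β)) ^ n))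
        = fun n : ℕ => ((n + 1 : ℕ) : ℝ) * (p * (1 - p) ^ ((n + 1) - 1)) * (1 - β) ^ (n + 1) / β := by
      funext n
      have : (n + 1) - 1 = n := by omega
      rw [this]
      push_cast
      rw [mul_pow]
      field_simp
      ring
    rw [hfun] at hbase
    have := (hasSum_nat_add_iff
      (f := fun i : ℕ => (i : ℝ) * (p * (1 - p) ^ (i - 1)) * (1 - β) ^ i / β) 1).mp hbase
    simpa using this
  have hFsum : Summable F := by
    refine (summable_prod_of_nonneg hFnn).mpr ⟨fun i => (hrow i).summable, ?_⟩
    have : (fun i => ∑' j, F (i, j))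
        = fun i : ℕ => (i : ℝ) * (p * (1 - p) ^ (i - 1)) * (1 - β) ^ i / β := by
      funext i; exact (hrow i).tsum_eq
    rw [this]
    exact houter.summable
  have htsumF : ∑' a, F a = p * (1 - β) / β * (1 / (1 - (1 - p) * (1 - β)) ^ 2) := by
    rw [Summable.tsum_prod' hFsum (fun i => (hrow i).summable)]
    rw [tsum_congr (fun i => (hrow i).tsum_eq)]
    exact houter.tsum_eq
  -- measure-theoretic reduction
  have hcastX : Measurable fun ω => (X ω : ℝ) := (measurable_of_countable _).comp hX
  have hcastT : Measurable fun ω => (T ω : ℝ) := (measurable_of_countable _).comp hT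
  have hfm : Measurable fun ω => (X ω : ℝ) * max 0 ((T ω : ℝ) - (X ω : ℝ)) :=
    hcastX.mul (measurable_const.max (hcastT.sub hcastX))
  have hfnn : ∀ ω, 0 ≤ (X ω : ℝ) * max 0 ((T ω : ℝ) - (X ω : ℝ)) :=
    fun ω => mul_nonneg (Nat.cast_nonneg _) (le_max_left _ _)
  rw [integral_eq_lintegral_of_nonneg_ae (Filter.Eventually.of_forall hfnn)
    hfm.aestronglyMeasurable]
  have hYm : Measurable fun ω => (X ω, T ω) := hX.prodMk hT
  set g : ℕ × ℕ → ENNReal := fun a => ENNReal.ofReal ((a.1 : ℝ) * max 0 ((a.2 : ℝ) - a.1))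
    with hgdef
  have hcomp : (fun ω => ENNReal.ofReal ((X ω : ℝ) * max 0 ((T ω : ℝ) - (X ω : ℝ))))
      = g ∘ fun ω => (X ω, T ω) := rfl
  rw [hcomp]
  have hlmap : lintegral P (g ∘ fun ω => (X ω, T ω)) = ∫⁻ a, g a ∂(P.map fun ω => (X ω, T ω)) :=
    (lintegral_map (measurable_of_countable g) hYm).symm
  rw [hlmap, lintegral_countable']
  have hmass : ∀ a : ℕ × ℕ, g a * (P.map fun ω => (X ω, T ω)) {a} = ENNReal.ofReal (F a) := by
    rintro ⟨i, j⟩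
    rcases Nat.eq_zero_or_pos i with hi | hi
    · subst hi
      simp [hgdef, hFdef]
    rcases Nat.eq_zero_or_pos j with hj | hj
    · subst hj
      have h1 : max 0 (((0:ℕ) : ℝ) - (i:ℝ)) = 0 := by
        apply max_eq_left
        simp [Nat.cast_nonneg]
      simp [hgdef, hFdef, h1]
    have hmap : (P.map fun ω => (X ω, T ω)) {(i, j)}
        = ENNReal.ofReal (p * (1 - p) ^ (i - 1)) * ENNReal.ofReal (β * (1 - β) ^ (j - 1)) := by
      rw [Measure.map_apply hYm (measurableSet_singleton _)]
      have hset : ((fun ω => (X ω, T ω)) ⁻¹' {(i, j)}) = (X ⁻¹' {i}) ∩ (T ⁻¹' {j}) := by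
        ext ω; simp [Prod.ext_iff]
      rw [hset, hind.measure_inter_preimage_eq_mul {i} {j} (measurableSet_singleton _)
        (measurableSet_singleton _)]
      have e1 : X ⁻¹' {i} = {ω | X ω = i} := rfl
      have e2 : T ⁻¹' {j} = {ω | T ω = j} := rfl
      rw [e1, e2, hXdist i hi, hTdist j hj]
    rw [hmap, hgdef, hFdef]
    rw [← ENNReal.ofReal_mul (by positivity), ← ENNReal.ofReal_mul
      (mul_nonneg (Nat.cast_nonneg _) (le_max_left _ _))]
  rw [tsum_congr hmass, ← ENNReal.ofReal_tsum_of_nonneg hFnn hFsum,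
    ENNReal.toReal_ofReal (tsum_nonneg hFnn), htsumF]
  field_simp
end

section
/- Let 0 < p < μ < 1 be real numbers and set β = (μ − p)/(1 − p). Let X, T, S be mutually independent random variables on a probability space, each taking values in the positive integers, with P(X = j) = p·(1 − p)^{j−1}, P(T = j) = β·(1 − β)^{j−1}, and P(S = j) = μ·(1 − μ)^{j−1} for j = 1, 2, …. Then the average age of information Δ̄ = p·( E[X²]/2 + E[X]/2 + E[X·max(0, T − X)] + E[X]·E[S] ) satisfies Δ̄ = 1/p + p/μ + (1 − p)/(μ − p) − p/μ². -/
open MeasureTheory ProbabilityTheory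

section AoiAux

/-- geometric moment sum: ∑ (n+1) r^n with r = 1-q. -/
lemma aoi_geomA {q : ℝ} (h0 : 0 < q) (h1 : q < 1) :
    HasSum (fun n : ℕ => ((n : ℝ) + 1) * (1 - q) ^ n) (1 / q ^ 2) := by
  have hr : ‖(1 - q : ℝ)‖ < 1 := by
    rw [Real.norm_eq_abs, abs_lt]; constructor <;> linarith
  have h := hasSum_choose_mul_geometric_of_norm_lt_one 1 hr
  have hfun : (fun n : ℕ => (((n + 1).choose 1 : ℕ) : ℝ) * (1 - q) ^ n)
      = fun n : ℕ => ((n : ℝ) + 1) * (1 - q) ^ n := by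
    funext n; simp [Nat.choose_one_right]
  rw [hfun] at h
  have hv : (1 : ℝ) / (1 - (1 - q)) ^ (1 + 1) = 1 / q ^ 2 := by norm_num
  rwa [hv] at h

lemma aoi_geomB {q : ℝ} (h0 : 0 < q) (h1 : q < 1) :
    HasSum (fun n : ℕ => ((n : ℝ) + 1) ^ 2 * (1 - q) ^ n) ((2 - q) / q ^ 3) := by
  have hr : ‖(1 - q : ℝ)‖ < 1 := by
    rw [Real.norm_eq_abs, abs_lt]; constructor <;> linarith
  have hA := (hasSum_choose_mul_geometric_of_norm_lt_one 2 hr).mul_left 2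
  have hB := hasSum_choose_mul_geometric_of_norm_lt_one 1 hr
  have h := hA.sub hB
  have hfun : (fun n : ℕ => 2 * ((((n + 2).choose 2 : ℕ) : ℝ) * (1 - q) ^ n)
        - (((n + 1).choose 1 : ℕ) : ℝ) * (1 - q) ^ n)
      = fun n : ℕ => ((n : ℝ) + 1) ^ 2 * (1 - q) ^ n := by
    funext n
    have : (((n + 2).choose 2 : ℕ) : ℝ) = ((n : ℝ) + 2) * (((n : ℝ) + 2) - 1) / 2 := by
      rw [Nat.cast_choose_two]
      push_cast
      ring
    rw [this]
    simp [Nat.choose_one_right]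
    push_cast
    ring
  rw [hfun] at h
  have hv : 2 * ((1 : ℝ) / (1 - (1 - q)) ^ (2 + 1)) - 1 / (1 - (1 - q)) ^ (1 + 1)
      = (2 - q) / q ^ 3 := by
    have : (1 : ℝ) - (1 - q) = q := by ring
    rw [this]
    field_simp
    ring
  rwa [hv] at h

/-- inner sum for the joint term. -/
lemma aoi_geomC {b : ℝ} (h0 : 0 < b) (h1 : b < 1) (i : ℕ) :
    HasSum (fun n : ℕ => ((i : ℝ) * max 0 (((n + 1 : ℕ) : ℝ) - (i : ℝ))) * (b * (1 - b) ^ n))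
      ((i : ℝ) * (1 - b) ^ i / b) := by
  set f : ℕ → ℝ := fun n => ((i : ℝ) * max 0 (((n + 1 : ℕ) : ℝ) - (i : ℝ))) * (b * (1 - b) ^ n)
    with hf
  have key : HasSum (fun n : ℕ => f (n + i)) ((i : ℝ) * (1 - b) ^ i / b) := by
    have h := (aoi_geomA h0 h1).mul_left ((i : ℝ) * b * (1 - b) ^ i)
    have hfun : (fun n : ℕ => (i : ℝ) * b * (1 - b) ^ i * (((n : ℝ) + 1) * (1 - b) ^ n))
        = fun n : ℕ => f (n + i) := by
      funext n
      have hmax : max 0 (((n + i + 1 : ℕ) : ℝ) - (i : ℝ)) = (n : ℝ) + 1 := by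
        rw [max_eq_right] <;> push_cast <;> [skip; linarith [Nat.cast_nonneg (α := ℝ) n]]
        ring
      simp only [hf, hmax]
      rw [pow_add]
      push_cast [hmax]
      ring
    have hv : (i : ℝ) * b * (1 - b) ^ i * (1 / b ^ 2) = (i : ℝ) * (1 - b) ^ i / b := by
      field_simp
    rw [hfun, hv] at h
    exact h
  have h2 := (hasSum_nat_add_iff (f := f) i).mp key
  have hz : ∑ n ∈ Finset.range i, f n = 0 := by
    apply Finset.sum_eq_zero
    intro n hn
    have hn' : n + 1 ≤ i := Finset.mem_range.mp hn
    have : max 0 (((n + 1 : ℕ) : ℝ) - (i : ℝ)) = 0 := by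
      rw [max_eq_left]
      have : ((n + 1 : ℕ) : ℝ) ≤ (i : ℝ) := Nat.cast_le.mpr hn'
      linarith
    simp only [hf]
    rw [this, mul_zero, zero_mul]
  rwa [hz, add_zero] at h2

end AoiAux


set_option maxHeartbeats 1000000 in
lemma aoi_tsum_shift (φ : ℕ → ℝ) (hφ : ∀ n, 0 ≤ φ n) (m : ℕ → ENNReal) (h0 : m 0 = 0)
    (ρ : ℕ → ℝ) (hρ0 : ∀ n, 0 ≤ ρ n) (hρ : ∀ n, m (n + 1) = ENNReal.ofReal (ρ n)) (c : ℝ)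
    (hc : HasSum (fun n => φ (n + 1) * ρ n) c) :
    ∑' n, ENNReal.ofReal (φ n) * m n = ENNReal.ofReal c := by
  rw [tsum_eq_zero_add' (f := fun n => ENNReal.ofReal (φ n) * m n) ENNReal.summable,
    h0, mul_zero, zero_add]
  have h1 : ∀ n : ℕ, ENNReal.ofReal (φ (n + 1)) * m (n + 1)
      = ENNReal.ofReal (φ (n + 1) * ρ n) := by
    intro n; rw [hρ, ← ENNReal.ofReal_mul (hφ _)]
  simp_rw [h1]
  rw [← ENNReal.ofReal_tsum_of_nonneg (fun n => mul_nonneg (hφ _) (hρ0 _)) hc.summable,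
    hc.tsum_eq]

set_option maxHeartbeats 800000 in
lemma aoi_integral_comp {Ω : Type*} [MeasurableSpace Ω] (P : Measure Ω) [IsProbabilityMeasure P]
    (X : Ω → ℕ) (hX : Measurable X) (f : ℕ → ℝ) (hf : ∀ n, 0 ≤ f n) (c : ℝ) (hc0 : 0 ≤ c)
    (h : ∑' n, ENNReal.ofReal (f n) * P (X ⁻¹' {n}) = ENNReal.ofReal c) :
    ∫ ω, f (X ω) ∂P = c := by
  have hfm : Measurable f := measurable_of_countable f
  have h1 : ∫ ω, f (X ω) ∂P = ∫ n, f n ∂(P.map X) :=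
    (integral_map hX.aemeasurable hfm.aestronglyMeasurable).symm
  have h3 : ∫ n, f n ∂(P.map X) = (∫⁻ n, ENNReal.ofReal (f n) ∂(P.map X)).toReal :=
    integral_eq_lintegral_of_nonneg_ae (ae_of_all _ hf) hfm.aestronglyMeasurable
  have h4 : ∫⁻ n, ENNReal.ofReal (f n) ∂(P.map X) = ∑' n, ENNReal.ofReal (f n) * (P.map X) {n} :=
    lintegral_countable' _
  have h2 : ∀ n : ℕ, (P.map X) {n} = P (X ⁻¹' {n}) := fun n =>
    Measure.map_apply hX (measurableSet_singleton n)
  rw [h1, h3, h4]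
  simp_rw [h2]
  rw [h, ENNReal.toReal_ofReal hc0]


set_option maxHeartbeats 800000 in
lemma aoi_integral_comp2 {Ω : Type*} [MeasurableSpace Ω] (P : Measure Ω) [IsProbabilityMeasure P]
    (X T : Ω → ℕ) (hX : Measurable X) (hT : Measurable T) (hind : IndepFun X T P)
    (g : ℕ → ℕ → ℝ) (hg : ∀ i j, 0 ≤ g i j) (G : ℕ → ℝ)
    (hinner : ∀ i, ∑' j, ENNReal.ofReal (g i j) * P (T ⁻¹' {j}) = ENNReal.ofReal (G i))
    (c : ℝ) (hc0 : 0 ≤ c)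
    (houter : ∑' i, ENNReal.ofReal (G i) * P (X ⁻¹' {i}) = ENNReal.ofReal c) :
    ∫ ω, g (X ω) (T ω) ∂P = c := by
  have hmap : P.map (fun ω => (X ω, T ω)) = (P.map X).prod (P.map T) :=
    (indepFun_iff_map_prod_eq_prod_map_map hX.aemeasurable hT.aemeasurable).mp hind
  set F : ℕ × ℕ → ℝ := fun q => g q.1 q.2 with hF
  have hgm : Measurable F := measurable_of_countable _
  have hpair : Measurable (fun ω => (X ω, T ω)) := hX.prodMk hT
  have h1 : ∫ ω, g (X ω) (T ω) ∂P = ∫ q : ℕ × ℕ, F q ∂((P.map X).prod (P.map T)) := by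
    rw [← hmap]
    exact (integral_map hpair.aemeasurable hgm.aestronglyMeasurable).symm
  have h3 : ∫ q : ℕ × ℕ, F q ∂((P.map X).prod (P.map T))
      = (∫⁻ q, ENNReal.ofReal (F q) ∂((P.map X).prod (P.map T))).toReal :=
    integral_eq_lintegral_of_nonneg_ae (ae_of_all _ fun q => hg q.1 q.2)
      hgm.aestronglyMeasurable
  have h4 : ∫⁻ q, ENNReal.ofReal (F q) ∂((P.map X).prod (P.map T))
      = ∑' q : ℕ × ℕ, ENNReal.ofReal (F q) * ((P.map X).prod (P.map T)) {q} :=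
    lintegral_countable' _
  have h2 : ∀ q : ℕ × ℕ, ((P.map X).prod (P.map T)) {q} = P (X ⁻¹' {q.1}) * P (T ⁻¹' {q.2}) := by
    intro q
    rw [show ({q} : Set (ℕ × ℕ)) = {q.1} ×ˢ {q.2} by simp, Measure.prod_prod,
      Measure.map_apply hX (measurableSet_singleton _),
      Measure.map_apply hT (measurableSet_singleton _)]
  rw [h1, h3, h4]
  simp_rw [h2]
  rw [ENNReal.tsum_prod']
  have h5 : ∀ i : ℕ, ∑' j, ENNReal.ofReal (F (i, j)) * (P (X ⁻¹' {(i, j).1}) * P (T ⁻¹' {(i, j).2}))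
      = ENNReal.ofReal (G i) * P (X ⁻¹' {i}) := by
    intro i
    calc ∑' j, ENNReal.ofReal (F (i, j)) * (P (X ⁻¹' {(i, j).1}) * P (T ⁻¹' {(i, j).2}))
        = ∑' j, P (X ⁻¹' {i}) * (ENNReal.ofReal (g i j) * P (T ⁻¹' {j})) := by
          congr 1; funext j; simp only [hF]; ring
      _ = P (X ⁻¹' {i}) * ∑' j, ENNReal.ofReal (g i j) * P (T ⁻¹' {j}) :=
          ENNReal.tsum_mul_left
      _ = ENNReal.ofReal (G i) * P (X ⁻¹' {i}) := by rw [hinner i, mul_comm]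
  simp_rw [h5]
  rw [houter, ENNReal.toReal_ofReal hc0]

section AoiMain


/-- Theorem 2 (average AoI): with `0 < p < μ < 1`, `β = (μ − p)/(1 − p)`, and
mutually independent geometric random variables `X`, `T`, `S` on the positive
integers with parameters `p`, `β`, `μ` respectively, the average AoI
`Δ̄ = p·(E[X²]/2 + E[X]/2 + E[X·max(0, T − X)] + E[X]·E[S])`
equals `1/p + p/μ + (1 − p)/(μ − p) − p/μ²`. -/
theorem csma_average_aoi
    {Ω : Type*} [MeasurableSpace Ω] (P : Measure Ω) [IsProbabilityMeasure P]
    (p μ β : ℝ) (hp0 : 0 < p) (hpμ : p < μ) (hμ1 : μ < 1)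
    (hβ : β = (μ - p) / (1 - p))
    (X T S : Ω → ℕ) (hX : Measurable X) (hT : Measurable T) (hS : Measurable S)
    (hind : iIndepFun ![X, T, S] P)
    (hXpos : ∀ ω, 1 ≤ X ω) (hTpos : ∀ ω, 1 ≤ T ω) (hSpos : ∀ ω, 1 ≤ S ω)
    (hXdist : ∀ j : ℕ, 1 ≤ j →
      P {ω | X ω = j} = ENNReal.ofReal (p * (1 - p) ^ (j - 1)))
    (hTdist : ∀ j : ℕ, 1 ≤ j →
      P {ω | T ω = j} = ENNReal.ofReal (β * (1 - β) ^ (j - 1)))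
    (hSdist : ∀ j : ℕ, 1 ≤ j →
      P {ω | S ω = j} = ENNReal.ofReal (μ * (1 - μ) ^ (j - 1))) :
    p * ((∫ ω, ((X ω : ℝ)) ^ 2 ∂P) / 2 + (∫ ω, (X ω : ℝ) ∂P) / 2 +
        (∫ ω, (X ω : ℝ) * max 0 ((T ω : ℝ) - (X ω : ℝ)) ∂P) +
        (∫ ω, (X ω : ℝ) ∂P) * ∫ ω, (S ω : ℝ) ∂P) =
      1 / p + p / μ + (1 - p) / (μ - p) - p / μ ^ 2 := by
  -- basic numeric facts
  have hμ0 : 0 < μ := hp0.trans hpμ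
  have hp1 : p < 1 := hpμ.trans hμ1
  have h1p : (0 : ℝ) < 1 - p := by linarith
  have hμp : (0 : ℝ) < μ - p := by linarith
  have hβ0 : 0 < β := by rw [hβ]; positivity
  have hβ1 : β < 1 := by
    rw [hβ, div_lt_one h1p]; linarith
  have h1β : (1 - p) * (1 - β) = 1 - μ := by
    rw [hβ]; field_simp; ring
  -- zero-preimage facts
  have hX0 : P (X ⁻¹' {0}) = 0 := by
    have : X ⁻¹' {0} = ∅ := by
      ext ω
      simp only [Set.mem_preimage, Set.mem_singleton_iff, Set.mem_empty_iff_false, iff_false]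
      have := hXpos ω; omega
    rw [this, measure_empty]
  have hT0 : P (T ⁻¹' {0}) = 0 := by
    have : T ⁻¹' {0} = ∅ := by
      ext ω
      simp only [Set.mem_preimage, Set.mem_singleton_iff, Set.mem_empty_iff_false, iff_false]
      have := hTpos ω; omega
    rw [this, measure_empty]
  have hS0 : P (S ⁻¹' {0}) = 0 := by
    have : S ⁻¹' {0} = ∅ := by
      ext ω
      simp only [Set.mem_preimage, Set.mem_singleton_iff, Set.mem_empty_iff_false, iff_false]
      have := hSpos ω; omega
    rw [this, measure_empty]
  -- distribution facts, shifted
  have hXd : ∀ n : ℕ, P (X ⁻¹' {n + 1}) = ENNReal.ofReal (p * (1 - p) ^ n) := by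
    intro n
    have h := hXdist (n + 1) (Nat.le_add_left 1 n)
    rw [show X ⁻¹' {n + 1} = {ω | X ω = n + 1} from rfl]
    simpa using h
  have hTd : ∀ n : ℕ, P (T ⁻¹' {n + 1}) = ENNReal.ofReal (β * (1 - β) ^ n) := by
    intro n
    have h := hTdist (n + 1) (Nat.le_add_left 1 n)
    rw [show T ⁻¹' {n + 1} = {ω | T ω = n + 1} from rfl]
    simpa using h
  have hSd : ∀ n : ℕ, P (S ⁻¹' {n + 1}) = ENNReal.ofReal (μ * (1 - μ) ^ n) := by
    intro n
    have h := hSdist (n + 1) (Nat.le_add_left 1 n)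
    rw [show S ⁻¹' {n + 1} = {ω | S ω = n + 1} from rfl]
    simpa using h
  have hρp0 : ∀ n : ℕ, 0 ≤ p * (1 - p) ^ n := fun n => by positivity
  have hρβ0 : ∀ n : ℕ, 0 ≤ β * (1 - β) ^ n := fun n => by
    have : (0:ℝ) ≤ 1 - β := by linarith
    positivity
  have hρμ0 : ∀ n : ℕ, 0 ≤ μ * (1 - μ) ^ n := fun n => by
    have : (0:ℝ) ≤ 1 - μ := by linarith
    positivity
  -- E[X]
  have hcX : HasSum (fun n : ℕ => (((n + 1 : ℕ) : ℝ)) * (p * (1 - p) ^ n)) (1 / p) := by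
    have h := (aoi_geomA hp0 hp1).mul_left p
    have hfun : (fun n : ℕ => p * (((n : ℝ) + 1) * (1 - p) ^ n))
        = fun n : ℕ => (((n + 1 : ℕ) : ℝ)) * (p * (1 - p) ^ n) := by
      funext n; push_cast; ring
    have hval : p * (1 / p ^ 2) = 1 / p := by field_simp
    rwa [hfun, hval] at h
  have EX : ∫ ω, (X ω : ℝ) ∂P = 1 / p :=
    aoi_integral_comp P X hX (fun n => (n : ℝ)) (fun n => Nat.cast_nonneg n) (1 / p)
      (by positivity)
      (aoi_tsum_shift (fun n => (n : ℝ)) (fun n => Nat.cast_nonneg n) _ hX0 _ hρp0 hXd _ hcX)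
  -- E[X^2]
  have hcX2 : HasSum (fun n : ℕ => (((n + 1 : ℕ) : ℝ)) ^ 2 * (p * (1 - p) ^ n))
      ((2 - p) / p ^ 2) := by
    have h := (aoi_geomB hp0 hp1).mul_left p
    have hfun : (fun n : ℕ => p * (((n : ℝ) + 1) ^ 2 * (1 - p) ^ n))
        = fun n : ℕ => (((n + 1 : ℕ) : ℝ)) ^ 2 * (p * (1 - p) ^ n) := by
      funext n; push_cast; ring
    have hval : p * ((2 - p) / p ^ 3) = (2 - p) / p ^ 2 := by field_simp
    rwa [hfun, hval] at h
  have EX2 : ∫ ω, ((X ω : ℝ)) ^ 2 ∂P = (2 - p) / p ^ 2 :=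
    aoi_integral_comp P X hX (fun n => (n : ℝ) ^ 2) (fun n => sq_nonneg _) ((2 - p) / p ^ 2)
      (div_nonneg (by linarith) (by positivity))
      (aoi_tsum_shift (fun n => (n : ℝ) ^ 2) (fun n => sq_nonneg _) _ hX0 _ hρp0 hXd _ hcX2)
  -- E[S]
  have hcS : HasSum (fun n : ℕ => (((n + 1 : ℕ) : ℝ)) * (μ * (1 - μ) ^ n)) (1 / μ) := by
    have h := (aoi_geomA hμ0 hμ1).mul_left μ
    have hfun : (fun n : ℕ => μ * (((n : ℝ) + 1) * (1 - μ) ^ n))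
        = fun n : ℕ => (((n + 1 : ℕ) : ℝ)) * (μ * (1 - μ) ^ n) := by
      funext n; push_cast; ring
    have hval : μ * (1 / μ ^ 2) = 1 / μ := by field_simp
    rwa [hfun, hval] at h
  have ES : ∫ ω, (S ω : ℝ) ∂P = 1 / μ :=
    aoi_integral_comp P S hS (fun n => (n : ℝ)) (fun n => Nat.cast_nonneg n) (1 / μ)
      (by positivity)
      (aoi_tsum_shift (fun n => (n : ℝ)) (fun n => Nat.cast_nonneg n) _ hS0 _ hρμ0 hSd _ hcS)
  -- joint term
  have hindXT : IndepFun X T P := by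
    have h := hind.indepFun (i := 0) (j := 1) (by decide)
    simpa using h
  set g : ℕ → ℕ → ℝ := fun i j => (i : ℝ) * max 0 ((j : ℝ) - (i : ℝ)) with hg
  set G : ℕ → ℝ := fun i => (i : ℝ) * (1 - β) ^ i / β with hG
  have hGnn : ∀ i, 0 ≤ G i := by
    intro i
    have h1 : (0:ℝ) ≤ 1 - β := by linarith
    simp only [hG]
    positivity
  have hgnn : ∀ i j, 0 ≤ g i j := fun i j =>
    mul_nonneg (Nat.cast_nonneg i) (le_max_left 0 _)
  have hinner : ∀ i, ∑' j, ENNReal.ofReal (g i j) * P (T ⁻¹' {j}) = ENNReal.ofReal (G i) :=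
    fun i =>
      aoi_tsum_shift (fun j => g i j) (fun j => hgnn i j) _ hT0 _ hρβ0 hTd _
        (aoi_geomC hβ0 hβ1 i)
  have hW0 : (0:ℝ) ≤ p * (1 - μ) / ((μ - p) * μ ^ 2) := by
    have h1 : (0:ℝ) ≤ 1 - μ := by linarith
    positivity
  have hcD : HasSum (fun n : ℕ => G (n + 1) * (p * (1 - p) ^ n))
      (p * (1 - μ) / ((μ - p) * μ ^ 2)) := by
    have h := (aoi_geomA hμ0 hμ1).mul_left (p * (1 - β) / β)
    have hfun : (fun n : ℕ => p * (1 - β) / β * (((n : ℝ) + 1) * (1 - μ) ^ n))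
        = fun n : ℕ => G (n + 1) * (p * (1 - p) ^ n) := by
      funext n
      simp only [hG]
      rw [← h1β, mul_pow]
      push_cast
      ring
    have hval : p * (1 - β) / β * (1 / μ ^ 2) = p * (1 - μ) / ((μ - p) * μ ^ 2) := by
      rw [hβ]
      field_simp
      ring
    rwa [hfun, hval] at h
  have EXT : ∫ ω, (X ω : ℝ) * max 0 ((T ω : ℝ) - (X ω : ℝ)) ∂P
      = p * (1 - μ) / ((μ - p) * μ ^ 2) :=
    aoi_integral_comp2 P X T hX hT hindXT g hgnn G hinner _ hW0
      (aoi_tsum_shift G hGnn _ hX0 _ hρp0 hXd _ hcD)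
  rw [EX, EX2, ES, EXT]
  field_simp
  ring
end AoiMain
end
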